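/- (Gaussian Formula) For every positive integer n, the alternating sum ∑_{m=0}^{n}(-1)^m · binom(n,m)_q equals 0 if n is odd, and equals ∏_{k odd, 1 ≤ k ≤ n}(1-q^k) if n is even. -/
import Mathlib


open Polynomial Finset

/-- The Gaussian (q-)binomial coefficient as a polynomial, satisfying the
product formula `∏_{i=n-m+1}^{n}(1-q^i) / ∏_{i=1}^{m}(1-q^i)`. -/
noncomputable def qbinom (R : Type*) [CommRing R] : ℕ → ℕ → Polynomial R
  | _, 0 => 1
  | 0, _+1 => 0
  | n+1, m+1 => qbinom R n (m+1) + X ^ (n - m) * qbinom R n m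

lemma qbinom_zero (R : Type*) [CommRing R] (n : ℕ) : qbinom R n 0 = 1 := by
  cases n <;> rfl

lemma qbinom_zero_succ (R : Type*) [CommRing R] (m : ℕ) : qbinom R 0 (m+1) = 0 := rfl

lemma qbinom_succ_succ (R : Type*) [CommRing R] (n m : ℕ) :
    qbinom R (n+1) (m+1) = qbinom R n (m+1) + X ^ (n - m) * qbinom R n m := rfl

lemma qbinom_eq_zero (R : Type*) [CommRing R] : ∀ n m : ℕ, n < m → qbinom R n m = 0
  | 0, _+1, _ => rfl
  | n+1, m+1, h => by
    rw [qbinom_succ_succ, qbinom_eq_zero R n (m+1) (by omega),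
      qbinom_eq_zero R n m (by omega)]
    ring

lemma qbinom_pascal' (R : Type*) [CommRing R] : ∀ n m : ℕ,
    qbinom R (n+1) (m+1) = X ^ (m+1) * qbinom R n (m+1) + qbinom R n m
  | 0, 0 => by
    simp [qbinom_succ_succ, qbinom_zero, qbinom_zero_succ]
  | 0, m+1 => by
    simp [qbinom_succ_succ, qbinom_zero_succ]
  | n+1, 0 => by
    conv_lhs => rw [qbinom_succ_succ R (n+1) 0, qbinom_pascal' R n 0]
    conv_rhs => rw [qbinom_succ_succ R n 0]
    rw [qbinom_zero, qbinom_zero]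
    have key : (X : Polynomial R) ^ (n + 1 - 0) = X ^ (0 + 1) * X ^ (n - 0) := by
      rw [← pow_add]; congr 1; omega
    rw [key]; ring
  | n+1, m+1 => by
    conv_lhs => rw [qbinom_succ_succ R (n+1) (m+1), qbinom_pascal' R n (m+1),
      qbinom_pascal' R n m]
    conv_rhs => rw [qbinom_succ_succ R n (m+1), qbinom_succ_succ R n m]
    rw [show n + 1 - (m + 1) = n - m from by omega]
    rcases le_or_gt (m+1) n with h | h
    · have key : (X : Polynomial R) ^ (n - m) * X ^ (m+1)
          = X ^ (m+1+1) * X ^ (n - (m+1)) := by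
        rw [← pow_add, ← pow_add]; congr 1; omega
      linear_combination qbinom R n (m+1) * key
    · rw [qbinom_eq_zero R n (m+1) (by omega)]
      have e1 : n - m = 0 := by omega
      have e2 : n - (m+1) = 0 := by omega
      rw [e1, e2]; ring

noncomputable def gaussS (n : ℕ) : Polynomial ℤ :=
  ∑ m ∈ Finset.range (n + 1), (-1 : Polynomial ℤ) ^ m * qbinom ℤ n m

noncomputable def gaussA (n : ℕ) : Polynomial ℤ :=
  ∑ m ∈ Finset.range (n + 1), (-1 : Polynomial ℤ) ^ m * X ^ m * qbinom ℤ n m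

lemma gaussA_alt (n : ℕ) :
    gaussA n = 1 + ∑ i ∈ Finset.range (n + 1),
      (-1 : Polynomial ℤ) ^ (i+1) * X ^ (i+1) * qbinom ℤ n (i+1) := by
  rw [Finset.sum_range_succ, qbinom_eq_zero ℤ n (n+1) (by omega), gaussA,
    Finset.sum_range_succ']
  simp [qbinom_zero]
  ring

lemma gaussS_succ (n : ℕ) : gaussS (n+1) = gaussA n - gaussS n := by
  rw [gaussS, Finset.sum_range_succ']
  simp only [qbinom_pascal' ℤ n, qbinom_zero, pow_zero, one_mul, mul_one]
  have expand : ∀ x : ℕ, (-1 : Polynomial ℤ)^(x+1) * (X^(x+1) * qbinom ℤ n (x+1) + qbinom ℤ n x)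
      = (-1)^(x+1) * X^(x+1) * qbinom ℤ n (x+1) + (-((-1)^x * qbinom ℤ n x)) := by
    intro x; ring
  simp only [expand]
  rw [Finset.sum_add_distrib, Finset.sum_neg_distrib, gaussA_alt, gaussS]
  ring

lemma gaussA_succ (n : ℕ) : gaussA (n+1) = gaussA n - X ^ (n+1) * gaussS n := by
  rw [gaussA, Finset.sum_range_succ']
  simp only [qbinom_succ_succ ℤ n, qbinom_zero, pow_zero, one_mul, mul_one]
  have expand : ∑ x ∈ Finset.range (n+1),
        (-1 : Polynomial ℤ)^(x+1) * X^(x+1) * (qbinom ℤ n (x+1) + X^(n-x) * qbinom ℤ n x)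
      = ∑ x ∈ Finset.range (n+1),
        ((-1 : Polynomial ℤ)^(x+1) * X^(x+1) * qbinom ℤ n (x+1)
          + (-(X^(n+1) * ((-1)^x * qbinom ℤ n x)))) := by
    refine Finset.sum_congr rfl fun x hx => ?_
    have hx' : x ≤ n := by have := Finset.mem_range.mp hx; omega
    have key : (X : Polynomial ℤ)^(x+1) * X^(n-x) = X^(n+1) := by
      rw [← pow_add]; congr 1; omega
    linear_combination ((-1 : Polynomial ℤ)^(x+1) * qbinom ℤ n x) * key
  rw [expand, Finset.sum_add_distrib, Finset.sum_neg_distrib, ← Finset.mul_sum,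
    gaussA_alt, gaussS]
  ring

lemma gaussS_two_step (n : ℕ) : gaussS (n+2) = (1 - X^(n+1)) * gaussS n := by
  have h1 : gaussS (n+2) = gaussA (n+1) - gaussS (n+1) := gaussS_succ (n+1)
  rw [h1, gaussA_succ, gaussS_succ]; ring

lemma gaussS_zero : gaussS 0 = 1 := by
  simp [gaussS, qbinom_zero]

lemma gaussS_one : gaussS 1 = 0 := by
  simp [gaussS, Finset.sum_range_succ, qbinom_succ_succ, qbinom_zero, qbinom_zero_succ]

lemma gauss_main : ∀ n : ℕ, gaussS n =
    if Odd n then 0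
    else ∏ k ∈ (Finset.Icc 1 n).filter (fun k => Odd k), (1 - X ^ k) := by
  intro n
  induction n using Nat.strong_induction_on with
  | _ n ih =>
    match n with
    | 0 => simp [gaussS_zero]
    | 1 => simp [gaussS_one]
    | (n+2) =>
      rw [gaussS_two_step, ih n (by omega)]
      rcases Nat.even_or_odd n with he | ho
      · have h1 : ¬ Odd n := by simp [Nat.not_odd_iff_even.mpr he]
        have h2 : ¬ Odd (n+2) := by
          rw [Nat.odd_iff] at *; omega
        rw [if_neg h1, if_neg h2]
        have hset : (Finset.Icc 1 (n+2)).filter (fun k => Odd k)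
            = insert (n+1) ((Finset.Icc 1 n).filter (fun k => Odd k)) := by
          ext k
          simp only [Finset.mem_filter, Finset.mem_Icc, Finset.mem_insert, Nat.odd_iff]
          have hn2 : n % 2 = 0 := Nat.even_iff.mp he
          omega
        rw [hset, Finset.prod_insert (by simp [Finset.mem_filter, Finset.mem_Icc])]
      · have h1 : Odd n := ho
        have h2 : Odd (n+2) := by rw [Nat.odd_iff] at *; omega
        rw [if_pos h1, if_pos h2, mul_zero]

/-- The Gaussian Formula. -/
theorem gaussian_formula (n : ℕ) (hn : 0 < n) :
    ∑ m ∈ Finset.range (n + 1), (-1 : Polynomial ℤ) ^ m * qbinom ℤ n m =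
      if Odd n then 0
      else ∏ k ∈ (Finset.Icc 1 n).filter (fun k => Odd k), (1 - X ^ k) :=
  gauss_main n
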